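/- For every finite σ-structure A, the pathwidth of A equals the PR-coalgebra number of A minus one: pw(A) = κ^{PR}(A) − 1, where κ^{PR}(A) is the least k such that there exists a PR_k-coalgebra structure on A. -/

import Mathlib

/-- A relational signature: a type of relation symbols with arities. -/
structure Signature where
  symb : Type
  ar : symb → ℕ

/-- A σ-structure: a universe with interpretations of the relation symbols. -/
structure Struct (σ : Signature) where
  carrier : Type
  rel : ∀ r : σ.symb, (Fin (σ.ar r) → carrier) → Prop

/-- σ-homomorphism. -/
def Hom {σ : Signature} (A B : Struct σ) (f : A.carrier → B.carrier) : Prop :=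
  ∀ r x, A.rel r x → B.rel r (fun j => f (x j))

/-- Sequences of pebble placements. -/
abbrev PSeq (k : ℕ) (α : Type) := List (Fin k × α)

/-- Universe of PR_k A: a play together with an index into it. -/
def PRW (k : ℕ) (α : Type) : Type := { p : PSeq k α × ℕ // p.2 < p.1.length }

def eltOf {k : ℕ} {α : Type} (w : PRW k α) : α := (w.1.1.get ⟨w.1.2, w.2⟩).2
def pebOf {k : ℕ} {α : Type} (w : PRW k α) : Fin k := (w.1.1.get ⟨w.1.2, w.2⟩).1

/-- The pebble p (placed at position i) does not reoccur at positions i+1,...,m of s. -/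
def NoReoccur {k : ℕ} {α : Type} (s : PSeq k α) (i m : ℕ) (p : Fin k) : Prop :=
  ∀ l (h : l < s.length), i < l → l ≤ m → (s.get ⟨l, h⟩).1 ≠ p

/-- The pebble-relation construction PR_k on σ-structures. -/
def PR {σ : Signature} (k : ℕ) (A : Struct σ) : Struct σ where
  carrier := PRW k A.carrier
  rel r x :=
    (∀ j j', (x j).1.1 = (x j').1.1) ∧
    (∀ j j', NoReoccur (x j).1.1 (x j).1.2 (x j').1.2 (pebOf (x j))) ∧
    A.rel r (fun j => eltOf (x j))

/-- Counit ε(s,i) = a_i. -/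
def counit {k : ℕ} {α : Type} (w : PRW k α) : α := eltOf w

/-- Coextension f*(s,i) = (t,i) with same pebbles and j-th element f(s,j). -/
def coext {k : ℕ} {α β : Type} (f : PRW k α → β) (w : PRW k α) : PRW k β :=
  ⟨(List.ofFn (fun j : Fin w.1.1.length => ((w.1.1.get j).1, f ⟨(w.1.1, j.1), j.2⟩)), w.1.2),
   by simpa using w.2⟩

/-- Comultiplication δ = (id)*. -/
def comult {k : ℕ} {α : Type} : PRW k α → PRW k (PRW k α) := coext id

/-- Functor action PR_k f = (f ∘ ε)*. -/
def PRmap {k : ℕ} {α β : Type} (f : α → β) : PRW k α → PRW k β :=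
  coext (f ∘ counit)


/-- Gaifman adjacency: equal or co-occurring in some tuple of a relation. -/
def adj {σ : Signature} (A : Struct σ) (a a' : A.carrier) : Prop :=
  a = a' ∨ ∃ (r : σ.symb) (x : Fin (σ.ar r) → A.carrier),
    A.rel r x ∧ (∃ i, x i = a) ∧ (∃ i, x i = a')

/-- A coalgebra for PR_k: a σ-homomorphism α : A → PR_k A satisfying the
counit and comultiplication laws. -/
def IsCoalg {σ : Signature} (k : ℕ) (A : Struct σ) (α : A.carrier → PRW k A.carrier) : Prop :=
  Hom A (PR k A) α ∧ counit ∘ α = id ∧ comult ∘ α = PRmap α ∘ α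


lemma exists_greedy (k n : ℕ) (hk : 0 < k) (C : Fin n → Fin n → Prop)
    (hcard : ∀ l : Fin n, {i : Fin n | i < l ∧ C i l}.ncard ≤ k - 1) :
    ∃ p : Fin n → Fin k, ∀ i l : Fin n, i < l → C i l → p i ≠ p l := by
  classical
  suffices h : ∀ m : ℕ, ∃ p : Fin n → Fin k,
      ∀ i l : Fin n, i < l → (l : ℕ) < m → C i l → p i ≠ p l by
    obtain ⟨p, hp⟩ := h n
    exact ⟨p, fun i l hil hC => hp i l hil l.isLt hC⟩
  intro m
  induction m with
  | zero => exact ⟨fun _ => ⟨0, hk⟩, by omega⟩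
  | succ m ih =>
    obtain ⟨p, hp⟩ := ih
    by_cases hm : m < n
    · set l₀ : Fin n := ⟨m, hm⟩
      set B : Finset (Fin n) := Finset.univ.filter (fun i => i < l₀ ∧ C i l₀) with hB
      have hBcard : B.card ≤ k - 1 := by
        have hs : {i : Fin n | i < l₀ ∧ C i l₀} = (B : Set (Fin n)) := by
          ext i; simp [hB]
        have h2 := hcard l₀
        rwa [hs, Set.ncard_coe_finset] at h2
      have : ∃ c : Fin k, c ∉ B.image p := by
        by_contra hc
        push_neg at hc
        have huniv : (Finset.univ : Finset (Fin k)) ⊆ B.image p :=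
          fun c _ => hc c
        have := Finset.card_le_card huniv
        have h2 := Finset.card_image_le (s := B) (f := p)
        simp at this
        omega
      obtain ⟨c, hc⟩ := this
      refine ⟨Function.update p l₀ c, ?_⟩
      intro i l hil hlm hC
      have hine : i ≠ l₀ → Function.update p l₀ c i = p i := fun h => Function.update_of_ne h _ _
      by_cases hl : l = l₀
      · subst hl
        have hi : i ≠ l₀ := ne_of_lt hil
        rw [hine hi, Function.update_self]
        intro heq
        exact hc (Finset.mem_image.mpr ⟨i, by simp [hB, hil, hC], heq⟩)
      · have hlval : (l : ℕ) < m := by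
          rcases Nat.lt_succ_iff_lt_or_eq.mp hlm with h | h
          · exact h
          · exact absurd (Fin.ext h) hl
        have hi : i ≠ l₀ := by
          intro h
          have h1 : (i : ℕ) < (l : ℕ) := hil
          have h2 : (i : ℕ) = m := by rw [h]
          omega
        rw [hine hi, Function.update_of_ne hl]
        exact hp i l hil hlval hC
    · refine ⟨p, fun i l hil hlm hC => hp i l hil (by omega) hC⟩
lemma eltOf_congr {k : ℕ} {α : Type} (w w' : PRW k α) (h : w.1 = w'.1) : eltOf w = eltOf w' := by
  cases w; cases w'; cases h; rfl

lemma get_congr {k : ℕ} {α : Type} (s t : PSeq k α) (h : s = t) (i : ℕ) (hi : i < s.length)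
    (hi' : i < t.length) : s.get ⟨i, hi⟩ = t.get ⟨i, hi'⟩ := by cases h; rfl

lemma coalg_to_pd (σ : Signature) (A : Struct σ) [Finite A.carrier] (k : ℕ)
    (α : A.carrier → PRW k A.carrier) (hα : IsCoalg k A α) :
    ∃ (X : Type) (ord : LinearOrder X) (lam : X → Set A.carrier),
      (∀ a, ∃ x, a ∈ lam x) ∧
      (∀ a a', adj A a a' → ∃ x, a ∈ lam x ∧ a' ∈ lam x) ∧
      (∀ x y x' : X, ord.le x y → ord.le y x' → lam x ∩ lam x' ⊆ lam y) ∧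
      (∀ x, (lam x).Finite ∧ (lam x).ncard ≤ (k - 1) + 1) := by
  classical
  obtain ⟨hhom, hcounit, hcomult⟩ := hα
  have hε : ∀ a, eltOf (α a) = a := fun a => congrFun hcounit a
  letI : Fintype A.carrier := Fintype.ofFinite _
  letI : Encodable A.carrier := Fintype.toEncodable _
  set key : A.carrier → ℕ ×ₗ ℕ :=
    fun a => toLex (Encodable.encode (α a).1.1, (α a).1.2) with hkey
  have hkeyinj : Function.Injective key := by
    intro a b hab
    have h0 : (Encodable.encode (α a).1.1, (α a).1.2)
        = (Encodable.encode (α b).1.1, (α b).1.2) := congrArg ofLex hab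
    have hs : (α a).1.1 = (α b).1.1 :=
      Encodable.encode_injective (congrArg Prod.fst h0)
    have hi := congrArg Prod.snd h0
    have : eltOf (α a) = eltOf (α b) := eltOf_congr _ _ (Prod.ext hs hi)
    rwa [hε, hε] at this
  letI ord : LinearOrder A.carrier := LinearOrder.lift' key hkeyinj
  have hfst : ∀ a b : A.carrier, ord.le a b →
      Encodable.encode (α a).1.1 ≤ Encodable.encode (α b).1.1 := by
    intro a b h
    rcases Prod.Lex.le_iff.mp (h : key a ≤ key b) with h' | ⟨h', -⟩
    · exact le_of_lt h'
    · exact le_of_eq h'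
  have hsnd : ∀ a b : A.carrier, ord.le a b →
      Encodable.encode (α a).1.1 = Encodable.encode (α b).1.1 → (α a).1.2 ≤ (α b).1.2 := by
    intro a b h he
    rcases Prod.Lex.le_iff.mp (h : key a ≤ key b) with h' | ⟨-, h'⟩
    · exact absurd he (ne_of_lt h')
    · exact h'
  set lam : A.carrier → Set A.carrier := fun a =>
    {b | (α b).1.1 = (α a).1.1 ∧ (α b).1.2 ≤ (α a).1.2 ∧
      NoReoccur (α a).1.1 ((α b).1.2) ((α a).1.2) (pebOf (α b))} with hlam
  have hself : ∀ a, a ∈ lam a := by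
    intro a
    refine ⟨rfl, le_refl _, ?_⟩
    intro l hl h1 h2
    omega
  have hmem2 : ∀ a b : A.carrier, (α a).1.1 = (α b).1.1 → (α a).1.2 ≤ (α b).1.2 →
      NoReoccur (α a).1.1 ((α a).1.2) ((α b).1.2) (pebOf (α a)) → a ∈ lam b := by
    intro a b hs hi hnr
    refine ⟨hs, hi, ?_⟩
    rw [← hs]
    exact fun l hl h1 h2 => hnr l hl h1 h2
  have hcard : ∀ a, (lam a).ncard ≤ k := by
    intro a
    have hmapsto : ∀ b ∈ lam a, pebOf (α b) ∈ (Set.univ : Set (Fin k)) := fun _ _ => trivial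
    have hkey2 : ∀ c c' : A.carrier, c ∈ lam a → c' ∈ lam a → (α c).1.2 < (α c').1.2 →
        pebOf (α c) ≠ pebOf (α c') := by
      intro c c' hc hc' hlt
      obtain ⟨hcs, hci, hcn⟩ := hc
      obtain ⟨hcs', hci', hcn'⟩ := hc'
      have hl' : (α c').1.2 < (α a).1.1.length := by
        have h2 := (α c').2
        rwa [hcs'] at h2
      have hget : (α a).1.1.get ⟨(α c').1.2, hl'⟩ = (α c').1.1.get ⟨(α c').1.2, (α c').2⟩ :=
        get_congr _ _ hcs'.symm _ _ _
      have hne := hcn (α c').1.2 hl' hlt hci'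
      rw [hget] at hne
      intro hpe
      exact hne (show pebOf (α c') = pebOf (α c) from hpe.symm)
    have hinj : Set.InjOn (fun b => pebOf (α b)) (lam a) := by
      intro b hb b' hb' heq
      by_contra hne
      have hidx : (α b).1.2 ≠ (α b').1.2 := by
        intro h
        apply hne
        have : eltOf (α b) = eltOf (α b') :=
          eltOf_congr _ _ (Prod.ext (hb.1.trans hb'.1.symm) h)
        rwa [hε, hε] at this
      rcases lt_or_gt_of_ne hidx with h | h
      · exact hkey2 b b' hb hb' h heq
      · exact hkey2 b' b hb' hb h heq.symm
    have h3 := Set.ncard_le_ncard_of_injOn _ hmapsto hinj Set.finite_univ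
    simpa [Set.ncard_univ] using h3
  refine ⟨A.carrier, ord, lam, fun a => ⟨a, hself a⟩, ?_, ?_, ?_⟩
  · -- adjacency
    rintro a a' (rfl | ⟨r, x, hx, ⟨i0, rfl⟩, ⟨i1, rfl⟩⟩)
    · exact ⟨a, hself a, hself a⟩
    obtain ⟨hs, hnr, -⟩ := hhom r x hx
    rcases le_total ((α (x i0)).1.2) ((α (x i1)).1.2) with h | h
    · exact ⟨x i1, hmem2 _ _ (hs i0 i1) h (hnr i0 i1), hself _⟩
    · exact ⟨x i0, hself _, hmem2 _ _ (hs i1 i0) h (hnr i1 i0)⟩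
  · -- connectivity
    intro x y x' hxy hyx' b hb
    obtain ⟨⟨hbs1, hbi1, hbn1⟩, ⟨hbs2, hbi2, hbn2⟩⟩ := hb
    have hxx' : (α x).1.1 = (α x').1.1 := by rw [← hbs1, hbs2]
    have hexx' : Encodable.encode (α x).1.1 = Encodable.encode (α x').1.1 := by rw [hxx']
    have he1 := hfst x y hxy
    have he2 := hfst y x' hyx'
    have heyx : Encodable.encode (α y).1.1 = Encodable.encode (α x').1.1 := by omega
    have heyx2 : Encodable.encode (α x).1.1 = Encodable.encode (α y).1.1 := by omega
    have hsy : (α y).1.1 = (α x').1.1 := Encodable.encode_injective heyx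
    have hixy : (α x).1.2 ≤ (α y).1.2 := hsnd x y hxy heyx2
    have hiyx : (α y).1.2 ≤ (α x').1.2 := hsnd y x' hyx' heyx
    refine ⟨hbs2.trans hsy.symm, le_trans hbi1 hixy, ?_⟩
    intro l hl hbl hly
    have hl' : l < (α x').1.1.length := by rwa [hsy] at hl
    rw [get_congr _ _ hsy l hl hl']
    exact hbn2 l hl' hbl (le_trans hly hiyx)
  · -- cardinality
    intro a
    exact ⟨Set.toFinite _, by have := hcard a; omega⟩

lemma pd_to_coalg (σ : Signature) (A : Struct σ) [Finite A.carrier] (w : ℕ)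
    (X : Type) (ord : LinearOrder X) (lam : X → Set A.carrier)
    (hcov : ∀ a, ∃ x, a ∈ lam x)
    (hadj : ∀ a a', adj A a a' → ∃ x, a ∈ lam x ∧ a' ∈ lam x)
    (hconv : ∀ x y x' : X, ord.le x y → ord.le y x' → lam x ∩ lam x' ⊆ lam y)
    (hbag : ∀ x, (lam x).Finite ∧ (lam x).ncard ≤ w + 1) :
    ∃ α : A.carrier → PRW (w + 1) A.carrier, IsCoalg (w + 1) A α := by
  classical
  letI := ord
  -- witness bags
  let xw : A.carrier → X := fun a => (hcov a).choose
  have hxw : ∀ a, a ∈ lam (xw a) := fun a => (hcov a).choose_spec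
  let P := {p : A.carrier × A.carrier // adj A p.1 p.2}
  let yw : P → X := fun q => (hadj q.1.1 q.1.2 q.2).choose
  have hyw : ∀ q : P, q.1.1 ∈ lam (yw q) ∧ q.1.2 ∈ lam (yw q) :=
    fun q => (hadj q.1.1 q.1.2 q.2).choose_spec
  let W : Set X := Set.range xw ∪ Set.range yw
  have hWfin : W.Finite := (Set.finite_range xw).union (Set.finite_range yw)
  haveI := hWfin.to_subtype
  -- first bag of each element
  have hmin : ∀ a : A.carrier, ∃ mx : ↥W, a ∈ lam mx.1 ∧ ∀ y : ↥W, a ∈ lam y.1 → mx ≤ y := by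
    intro a
    have hne : {x : ↥W | a ∈ lam x.1}.Nonempty := ⟨⟨xw a, Or.inl ⟨a, rfl⟩⟩, hxw a⟩
    obtain ⟨mx, hmx, hm⟩ := Set.exists_min_image _ id (Set.toFinite _) hne
    exact ⟨mx, hmx, hm⟩
  let f : A.carrier → ↥W := fun a => (hmin a).choose
  have hf1 : ∀ a, a ∈ lam (f a).1 := fun a => (hmin a).choose_spec.1
  have hf2 : ∀ a (y : ↥W), a ∈ lam y.1 → f a ≤ y := fun a => (hmin a).choose_spec.2
  -- enumeration ordered by first bag
  obtain ⟨n₀, ⟨g⟩⟩ := Finite.exists_equiv_fin A.carrier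
  letI L : LinearOrder A.carrier := LinearOrder.lift' (fun a => toLex (f a, g a))
    (by intro a b hab
        have h0 : ((f a : ↥W), g a) = (f b, g b) := congrArg ofLex hab
        exact g.injective (congrArg Prod.snd h0))
  letI : Fintype A.carrier := Fintype.ofFinite _
  let e : Fin (Fintype.card A.carrier) ≃o A.carrier := monoEquivOfFin A.carrier rfl
  set n := Fintype.card A.carrier with hn
  have hfmono : ∀ i j : Fin n, i ≤ j → f (e i) ≤ f (e j) := by
    intro i j hij
    have h1 : (e i) ≤ (e j) := e.monotone hij
    rcases Prod.Lex.le_iff.mp (h1 : toLex (f (e i), g (e i)) ≤ toLex (f (e j), g (e j)))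
      with h' | ⟨h', -⟩
    · exact le_of_lt h'
    · exact le_of_eq h'
  -- conflict relation and clique bound
  let C : Fin n → Fin n → Prop := fun i l => ∃ j : Fin n, l ≤ j ∧ adj A (e i) (e j)
  have hCbag : ∀ i l : Fin n, i < l → C i l → (e i) ∈ lam (f (e l)).1 := by
    rintro i l hil ⟨j, hlj, hadj'⟩
    have hq : ((e i, e j) : A.carrier × A.carrier).1 = e i := rfl
    let q : P := ⟨(e i, e j), hadj'⟩
    have hyi : (e i) ∈ lam (yw q) := (hyw q).1
    have hyj : (e j) ∈ lam (yw q) := (hyw q).2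
    have hy : (yw q) ∈ W := Or.inr ⟨q, rfl⟩
    have h1 : f (e i) ≤ f (e l) := hfmono i l (le_of_lt hil)
    have h2 : f (e l) ≤ (⟨yw q, hy⟩ : ↥W) :=
      le_trans (hfmono l j hlj) (hf2 (e j) ⟨yw q, hy⟩ hyj)
    exact hconv (f (e i)).1 (f (e l)).1 (yw q) h1 h2 ⟨hf1 (e i), hyi⟩
  have hC : ∀ l : Fin n, {i : Fin n | i < l ∧ C i l}.ncard ≤ (w + 1) - 1 := by
    intro l
    have hmem : ∀ i ∈ {i : Fin n | i < l ∧ C i l}, (e i) ∈ lam (f (e l)).1 \ {e l} := by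
      rintro i ⟨hil, hCil⟩
      refine ⟨hCbag i l hil hCil, ?_⟩
      simp only [Set.mem_singleton_iff]
      intro h
      exact absurd (e.injective h) (ne_of_lt hil)
    have hinj : Set.InjOn (fun i => (e i : A.carrier)) {i : Fin n | i < l ∧ C i l} :=
      fun i _ j _ h => e.injective h
    have hfin : ((lam (f (e l)).1) \ {(e l : A.carrier)}).Finite := ((hbag _).1).diff
    have h4 := Set.ncard_le_ncard_of_injOn _ hmem hinj hfin
    have h1 := Set.ncard_diff_singleton_of_mem (hf1 (e l))
    have h2 := (hbag (f (e l)).1).2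
    omega
  obtain ⟨p, hp⟩ := exists_greedy (w + 1) n (by omega) C hC
  -- the global play
  set s : PSeq (w + 1) A.carrier := List.ofFn (fun i : Fin n => (p i, e i)) with hs
  have hslen : s.length = n := List.length_ofFn
  have hsget : ∀ (m : ℕ) (hm : m < s.length),
      s.get ⟨m, hm⟩ = (p ⟨m, hslen ▸ hm⟩, e ⟨m, hslen ▸ hm⟩) := by
    intro m hm
    simp only [List.get_eq_getElem, hs, List.getElem_ofFn]
  set α : A.carrier → PRW (w + 1) A.carrier :=
    fun a => ⟨(s, (e.symm a : ℕ)), by rw [hslen]; exact (e.symm a).isLt⟩ with hα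
  have hεα : ∀ a, eltOf (α a) = a := by
    intro a
    show (s.get ⟨(e.symm a : ℕ), _⟩).2 = a
    rw [hsget]
    show e ⟨(e.symm a : ℕ), _⟩ = a
    rw [Fin.eta]
    exact e.apply_symm_apply a
  have hpebα : ∀ a, pebOf (α a) = p (e.symm a) := by
    intro a
    show (s.get ⟨(e.symm a : ℕ), _⟩).1 = p (e.symm a)
    rw [hsget]
  have hα_e : ∀ (m : ℕ) (hm : m < n),
      α (e ⟨m, hm⟩) = ⟨(s, m), by rw [hslen]; exact hm⟩ := by
    intro m hm
    apply Subtype.ext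
    show (s, ((e.symm (e ⟨m, hm⟩)) : ℕ)) = (s, m)
    rw [e.symm_apply_apply]
  refine ⟨α, ?_, ?_, ?_⟩
  · -- homomorphism
    intro r x hx
    refine ⟨fun j j' => rfl, ?_, ?_⟩
    · intro j j'
      intro l hl h1 h2
      have hl' : l < n := hslen ▸ hl
      rw [hsget l hl]
      show p ⟨l, _⟩ ≠ pebOf (α (x j))
      rw [hpebα]
      have hil : (e.symm (x j)) < (⟨l, hl'⟩ : Fin n) := h1
      have hCil : C (e.symm (x j)) ⟨l, hl'⟩ := by
        refine ⟨e.symm (x j'), h2, ?_⟩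
        rw [e.apply_symm_apply, e.apply_symm_apply]
        exact Or.inr ⟨r, x, hx, ⟨j, rfl⟩, ⟨j', rfl⟩⟩
      exact (hp _ _ hil hCil).symm
    · have hfx : (fun j => eltOf (α (x j))) = x := funext fun j => hεα (x j)
      show A.rel r (fun j => eltOf (α (x j)))
      rw [hfx]
      exact hx
  · -- counit
    funext a
    exact hεα a
  · -- comultiplication
    funext a
    show comult (α a) = PRmap α (α a)
    apply Subtype.ext
    have hlists : (List.ofFn (fun j : Fin (α a).1.1.length =>
        (((α a).1.1.get j).1, (⟨((α a).1.1, j.1), j.2⟩ : PRW (w + 1) A.carrier))))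
        = (List.ofFn (fun j : Fin (α a).1.1.length =>
        (((α a).1.1.get j).1, α (counit ⟨((α a).1.1, j.1), j.2⟩)))) := by
      refine congrArg List.ofFn (funext fun j => ?_)
      refine Prod.ext rfl ?_
      show (⟨((α a).1.1, j.1), j.2⟩ : PRW (w + 1) A.carrier)
          = α (counit ⟨((α a).1.1, j.1), j.2⟩)
      have hj : (j : ℕ) < n := by
        have h5 := j.2
        exact hslen ▸ h5
      have hct : counit (⟨((α a).1.1, j.1), j.2⟩ : PRW (w + 1) A.carrier) = e ⟨j.1, hj⟩ := by
        show (s.get ⟨j.1, j.2⟩).2 = e ⟨j.1, hj⟩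
        rw [hsget]
      rw [hct, hα_e j.1 hj]
    exact congrArg (fun t => (t, (α a).1.2)) hlists

/-- for finite A, pathwidth pw(A) equals the PR-coalgebra number
κ^{PR}(A) minus one, where pw(A) is the least w such that A has a path
decomposition all of whose bags have at most w+1 elements, and κ^{PR}(A) is the
least k admitting a PR_k-coalgebra on A. -/
theorem pathwidth_eq_coalgebra_number_sub_one
    (σ : Signature) (A : Struct σ) [Finite A.carrier] :
    sInf {w : ℕ | ∃ (X : Type) (ord : LinearOrder X) (lam : X → Set A.carrier),
      (∀ a, ∃ x, a ∈ lam x) ∧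
      (∀ a a', adj A a a' → ∃ x, a ∈ lam x ∧ a' ∈ lam x) ∧
      (∀ x y x' : X, ord.le x y → ord.le y x' → lam x ∩ lam x' ⊆ lam y) ∧
      (∀ x, (lam x).Finite ∧ (lam x).ncard ≤ w + 1)} =
    sInf {k : ℕ | ∃ α : A.carrier → PRW k A.carrier, IsCoalg k A α} - 1 := by
  classical
  set S := {w : ℕ | ∃ (X : Type) (ord : LinearOrder X) (lam : X → Set A.carrier),
      (∀ a, ∃ x, a ∈ lam x) ∧
      (∀ a a', adj A a a' → ∃ x, a ∈ lam x ∧ a' ∈ lam x) ∧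
      (∀ x y x' : X, ord.le x y → ord.le y x' → lam x ∩ lam x' ⊆ lam y) ∧
      (∀ x, (lam x).Finite ∧ (lam x).ncard ≤ w + 1)} with hS
  set T := {k : ℕ | ∃ α : A.carrier → PRW k A.carrier, IsCoalg k A α} with hT
  have hS0 : Nat.card A.carrier ∈ S := by
    rw [hS]
    exact ⟨ℕ, inferInstance, fun _ => Set.univ, fun a => ⟨0, trivial⟩,
      fun a a' _ => ⟨0, trivial, trivial⟩,
      fun x y x' _ _ b hb => trivial,
      fun x => ⟨Set.finite_univ, by rw [Set.ncard_univ]; omega⟩⟩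
  have hST : ∀ w ∈ S, w + 1 ∈ T := by
    intro w hw
    rw [hS] at hw; rw [hT]
    obtain ⟨X, ord, lam, h1, h2, h3, h4⟩ := hw
    exact pd_to_coalg σ A w X ord lam h1 h2 h3 h4
  have hTS : ∀ k ∈ T, k - 1 ∈ S := by
    intro k hk
    rw [hT] at hk; rw [hS]
    obtain ⟨α, hα⟩ := hk
    exact coalg_to_pd σ A k α hα
  have hSne : S.Nonempty := ⟨_, hS0⟩
  have hTne : T.Nonempty := ⟨_, hST _ hS0⟩
  have h1 : sInf T ≤ sInf S + 1 := Nat.sInf_le (hST _ (Nat.sInf_mem hSne))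
  have h2 : sInf S ≤ sInf T - 1 := Nat.sInf_le (hTS _ (Nat.sInf_mem hTne))
  omega
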